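/- Let n, m ≥ 1 and let S be a real-linear map from the Hermitian n×n complex matrices to the Hermitian m×m complex matrices. Then S is completely positive — i.e., for every k ≥ 1 the induced map id_k ⊗ S on Hermitian (kn)×(kn) matrices maps positive semidefinite matrices to positive semidefinite matrices — if and only if the unique real-linear functional S' on Hermitian (nm)×(nm) complex matrices satisfying S'(a ⊗ bᵀ) = tr(S(a)·b) for all Hermitian n×n matrices a and Hermitian m×m matrices b is positive, i.e., S'(T) ≥ 0 for every positive semidefinite Hermitian T. Moreover S' exists and is unique. Equivalently, S is completely positive if and only if the transpose of the Choi matrix Σ_{i,j} E_{ij} ⊗ S(E_{ij}) is positive semidefinite. -/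

import Mathlib

open Matrix
open scoped ComplexOrder

namespace Stmt9Aux

variable {n m : ℕ}

/-- Linear maps on matrices agreeing on the standard basis are equal. -/
lemma linearMap_ext_std {α β : Type*} [Fintype α] [Fintype β] [DecidableEq α] [DecidableEq β]
    {N : Type*} [AddCommMonoid N] [Module ℂ N]
    {f g : Matrix α β ℂ →ₗ[ℂ] N}
    (h : ∀ u v, f (Matrix.single u v 1) = g (Matrix.single u v 1)) : f = g := by
  ext M
  have hM : M = ∑ u : α, ∑ v : β, (M u v) • Matrix.single u v (1 : ℂ) := by
    conv_lhs => rw [matrix_eq_sum_single M]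
    refine Finset.sum_congr rfl fun u _ => Finset.sum_congr rfl fun v _ => ?_
    rw [smul_single, smul_eq_mul, mul_one]
  rw [hM]
  simp only [map_sum, _root_.map_smul, h]

lemma map_conjTranspose
    (S : Matrix (Fin n) (Fin n) ℂ →ₗ[ℂ] Matrix (Fin m) (Fin m) ℂ)
    (hS : ∀ a : Matrix (Fin n) (Fin n) ℂ, a.IsHermitian → (S a).IsHermitian)
    (A : Matrix (Fin n) (Fin n) ℂ) : S Aᴴ = (S A)ᴴ := by
  have key : ∀ A1 A2 : Matrix (Fin n) (Fin n) ℂ, A1.IsHermitian → A2.IsHermitian →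
      S (A1 + Complex.I • A2)ᴴ = (S (A1 + Complex.I • A2))ᴴ := by
    intro A1 A2 h1 h2
    have e1 : (A1 + Complex.I • A2)ᴴ = A1 - Complex.I • A2 := by
      rw [conjTranspose_add, conjTranspose_smul, h1.eq, h2.eq, Complex.star_def,
        Complex.conj_I, neg_smul, sub_eq_add_neg]
    simp only [e1, map_sub, map_add, _root_.map_smul, conjTranspose_add, conjTranspose_smul,
      (hS A1 h1).eq, (hS A2 h2).eq, Complex.star_def, Complex.conj_I, neg_smul,
      sub_eq_add_neg, map_neg]
  have h1 : (((1:ℂ)/2) • (A + Aᴴ)).IsHermitian := by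
    rw [Matrix.IsHermitian, conjTranspose_smul, conjTranspose_add, conjTranspose_conjTranspose]
    simp [add_comm]
  have h2 : ((-(Complex.I)/2) • (A - Aᴴ)).IsHermitian := by
    rw [Matrix.IsHermitian, conjTranspose_smul, conjTranspose_sub, conjTranspose_conjTranspose]
    rw [show star (-(Complex.I)/2) = Complex.I/2 by simp [Complex.ext_iff]]
    ext i j
    simp [Matrix.sub_apply]
    ring
  have hdecomp : A = ((1:ℂ)/2) • (A + Aᴴ) + Complex.I • ((-(Complex.I)/2) • (A - Aᴴ)) := by
    ext i j
    simp [Matrix.add_apply, Matrix.sub_apply]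
    ring_nf
    rw [Complex.I_sq]
    ring
  conv_lhs => rw [hdecomp]
  conv_rhs => rw [hdecomp]
  exact key _ _ h1 h2

lemma map_eq_sum
    (S : Matrix (Fin n) (Fin n) ℂ →ₗ[ℂ] Matrix (Fin m) (Fin m) ℂ)
    (A : Matrix (Fin n) (Fin n) ℂ) :
    S A = ∑ i : Fin n, ∑ j : Fin n, A i j • S (Matrix.single i j 1) := by
  have hM : A = ∑ i : Fin n, ∑ j : Fin n, (A i j) • Matrix.single i j (1 : ℂ) := by
    conv_lhs => rw [matrix_eq_sum_single A]
    refine Finset.sum_congr rfl fun u _ => Finset.sum_congr rfl fun v _ => ?_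
    rw [smul_single, smul_eq_mul, mul_one]
  conv_lhs => rw [hM]
  simp only [map_sum, _root_.map_smul]


noncomputable def choi (S : Matrix (Fin n) (Fin n) ℂ →ₗ[ℂ] Matrix (Fin m) (Fin m) ℂ) :
    Matrix (Fin n × Fin m) (Fin n × Fin m) ℂ :=
  ∑ i : Fin n, ∑ j : Fin n,
    Matrix.kroneckerMap (· * ·) (Matrix.single i j (1 : ℂ))
      (S (Matrix.single i j (1 : ℂ)))

lemma choi_apply (S : Matrix (Fin n) (Fin n) ℂ →ₗ[ℂ] Matrix (Fin m) (Fin m) ℂ)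
    (i j : Fin n) (k l : Fin m) :
    choi S (i, k) (j, l) = S (Matrix.single i j 1) k l := by
  simp only [choi, Matrix.sum_apply, Matrix.kroneckerMap_apply, Matrix.single,
    Matrix.of_apply, ite_mul, one_mul, zero_mul]
  rw [Finset.sum_eq_single_of_mem i (Finset.mem_univ i) (by
    intro x _ hx
    apply Finset.sum_eq_zero
    intro y _
    simp [hx])]
  rw [Finset.sum_eq_single_of_mem j (Finset.mem_univ j) (by
    intro y _ hy
    simp [hy])]
  simp [Matrix.single]


lemma sum_swap12 {α β : Type*} [Fintype α] [Fintype β] {M : Type*} [AddCommMonoid M]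
    (f : α → β → M) : ∑ a : α, ∑ b : β, f a b = ∑ b : β, ∑ a : α, f a b :=
  Finset.sum_comm

lemma sum_swap23 {α β γ : Type*} [Fintype α] [Fintype β] [Fintype γ] {M : Type*}
    [AddCommMonoid M] (f : α → β → γ → M) :
    ∑ a : α, ∑ b : β, ∑ c : γ, f a b c = ∑ a : α, ∑ c : γ, ∑ b : β, f a b c :=
  Finset.sum_congr rfl fun a _ => Finset.sum_comm

lemma sum_swap34 {α β γ δ : Type*} [Fintype α] [Fintype β] [Fintype γ] [Fintype δ] {M : Type*}
    [AddCommMonoid M] (f : α → β → γ → δ → M) :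
    ∑ a : α, ∑ b : β, ∑ c : γ, ∑ d : δ, f a b c d =
      ∑ a : α, ∑ b : β, ∑ d : δ, ∑ c : γ, f a b c d :=
  Finset.sum_congr rfl fun a _ => Finset.sum_congr rfl fun b _ => Finset.sum_comm

lemma trace_choiT_mul (S : Matrix (Fin n) (Fin n) ℂ →ₗ[ℂ] Matrix (Fin m) (Fin m) ℂ)
    (K : Matrix (Fin n × Fin m) (Fin n × Fin m) ℂ) :
    Matrix.trace ((choi S)ᵀ * K) =
      ∑ i : Fin n, ∑ j : Fin n, ∑ k2 : Fin m, ∑ l2 : Fin m,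
        S (Matrix.single i j 1) k2 l2 * K (i, k2) (j, l2) := by
  have h1 : Matrix.trace ((choi S)ᵀ * K) =
      ∑ v : Fin n × Fin m, ∑ u : Fin n × Fin m, choi S v u * K v u := by
    rw [Matrix.trace]
    simp only [Matrix.diag, Matrix.mul_apply, Matrix.transpose_apply]
    rw [Finset.sum_comm]
  rw [h1]
  simp only [Fintype.sum_prod_type]
  refine Finset.sum_congr rfl fun i _ => ?_
  rw [Finset.sum_comm]
  refine Finset.sum_congr rfl fun j _ => Finset.sum_congr rfl fun k2 _ =>
    Finset.sum_congr rfl fun l2 _ => ?_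
  rw [choi_apply]

lemma feq (S : Matrix (Fin n) (Fin n) ℂ →ₗ[ℂ] Matrix (Fin m) (Fin m) ℂ)
    (a : Matrix (Fin n) (Fin n) ℂ) (b : Matrix (Fin m) (Fin m) ℂ) :
    Matrix.trace ((choi S)ᵀ * Matrix.kroneckerMap (· * ·) a bᵀ) = Matrix.trace (S a * b) := by
  rw [trace_choiT_mul]
  have h2 : Matrix.trace (S a * b) =
      ∑ k2 : Fin m, ∑ l2 : Fin m, (S a) k2 l2 * b l2 k2 := by
    rw [Matrix.trace]
    simp only [Matrix.diag, Matrix.mul_apply]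
  rw [h2]
  conv_rhs => rw [map_eq_sum S a]
  simp only [Matrix.sum_apply]
  simp only [Matrix.smul_apply, smul_eq_mul, Finset.sum_mul]
  simp only [Matrix.kroneckerMap_apply]
  rw [sum_swap23 (fun i j k2 => ∑ l2 : Fin m,
        S (Matrix.single i j 1) k2 l2 * (a i j * bᵀ k2 l2))]
  rw [sum_swap12]
  rw [sum_swap34 (fun k2 i j l2 =>
        S (Matrix.single i j 1) k2 l2 * (a i j * bᵀ k2 l2))]
  rw [sum_swap23 (fun k2 i l2 => ∑ j : Fin n,
        S (Matrix.single i j 1) k2 l2 * (a i j * bᵀ k2 l2))]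
  refine Finset.sum_congr rfl fun k2 _ => Finset.sum_congr rfl fun l2 _ =>
    Finset.sum_congr rfl fun i _ => Finset.sum_congr rfl fun j _ => ?_
  simp only [Matrix.transpose_apply]
  ring


/-- Outer product `x xᴴ` as a matrix. -/
def outer {α : Type*} (x : α → ℂ) : Matrix α α ℂ :=
  Matrix.of fun p q => x p * star (x q)

lemma psd_outer {α : Type*} [Fintype α] (x : α → ℂ) : (outer x).PosSemidef := by
  rw [Matrix.posSemidef_iff_dotProduct_mulVec]
  constructor
  · ext p q
    simp [outer, Matrix.conjTranspose_apply, mul_comm]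
  · intro y
    have hc : star (∑ q, star (x q) * y q) = ∑ p, x p * star (y p) := by
      simp [star_sum, star_mul', star_star]
    have h : star y ⬝ᵥ (outer x *ᵥ y) =
        star (∑ q, star (x q) * y q) * (∑ q, star (x q) * y q) := by
      rw [hc, Finset.sum_mul_sum]
      simp only [dotProduct, Matrix.mulVec, outer, Matrix.of_apply, Pi.star_apply,
        Finset.mul_sum]
      exact Finset.sum_congr rfl fun p _ => Finset.sum_congr rfl fun q _ => by ring
    rw [h]
    exact star_mul_self_nonneg _

lemma trace_mul_outer {α : Type*} [Fintype α] (N : Matrix α α ℂ) (x : α → ℂ) :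
    Matrix.trace (N * outer x) = star x ⬝ᵥ (N *ᵥ x) := by
  simp only [Matrix.trace, Matrix.diag, Matrix.mul_apply, outer, Matrix.of_apply,
    dotProduct, Matrix.mulVec, Pi.star_apply, Finset.mul_sum]
  refine Finset.sum_congr rfl fun p _ => Finset.sum_congr rfl fun q _ => ?_
  ring

lemma trace_conjTranspose_mul_self_nonneg {α : Type*} [Fintype α] (X : Matrix α α ℂ) :
    0 ≤ Matrix.trace (Xᴴ * X) := by
  simp only [Matrix.trace, Matrix.diag, Matrix.mul_apply, Matrix.conjTranspose_apply]
  refine Finset.sum_nonneg fun p _ => Finset.sum_nonneg fun q _ => ?_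
  exact star_mul_self_nonneg _

open scoped MatrixOrder in
lemma trace_mul_nonneg {α : Type*} [Fintype α] [DecidableEq α] {A B : Matrix α α ℂ}
    (hA : A.PosSemidef) (hB : B.PosSemidef) : 0 ≤ Matrix.trace (A * B) := by
  obtain ⟨P, hP⟩ := CStarAlgebra.nonneg_iff_eq_star_mul_self.mp hA.nonneg
  obtain ⟨Q, hQ⟩ := CStarAlgebra.nonneg_iff_eq_star_mul_self.mp hB.nonneg
  subst hP hQ
  simp only [Matrix.star_eq_conjTranspose]
  have h2 : Matrix.trace (Pᴴ * P * (Qᴴ * Q)) = Matrix.trace ((P * Qᴴ)ᴴ * (P * Qᴴ)) := by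
    rw [Matrix.conjTranspose_mul, Matrix.conjTranspose_conjTranspose]
    rw [show Pᴴ * P * (Qᴴ * Q) = (Pᴴ * (P * Qᴴ)) * Q by simp [Matrix.mul_assoc]]
    rw [Matrix.trace_mul_comm]
    simp [Matrix.mul_assoc]
  rw [h2]
  exact trace_conjTranspose_mul_self_nonneg _

lemma choi_isHermitian (S : Matrix (Fin n) (Fin n) ℂ →ₗ[ℂ] Matrix (Fin m) (Fin m) ℂ)
    (hS : ∀ a : Matrix (Fin n) (Fin n) ℂ, a.IsHermitian → (S a).IsHermitian) :
    (choi S).IsHermitian := by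
  have hstd : ∀ i j : Fin n, (Matrix.single i j (1:ℂ))ᴴ = Matrix.single j i 1 := by
    intro i j
    ext a b
    simp [Matrix.conjTranspose_apply, Matrix.single, and_comm]
  ext ⟨i, k⟩ ⟨j, l⟩
  rw [Matrix.conjTranspose_apply, choi_apply, choi_apply]
  have : S (Matrix.single j i 1) = (S (Matrix.single i j 1))ᴴ := by
    rw [← hstd, map_conjTranspose S hS]
  rw [this, Matrix.conjTranspose_apply, star_star]


noncomputable def Phi (S : Matrix (Fin n) (Fin n) ℂ →ₗ[ℂ] Matrix (Fin m) (Fin m) ℂ) (k : ℕ) :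
    Matrix (Fin k × Fin n) (Fin k × Fin n) ℂ →ₗ[ℂ] Matrix (Fin k × Fin m) (Fin k × Fin m) ℂ where
  toFun M := Matrix.of fun p q : Fin k × Fin m =>
    S (Matrix.of fun a b : Fin n => M (p.1, a) (q.1, b)) p.2 q.2
  map_add' M N := by
    ext p q
    have h : (Matrix.of fun a b : Fin n => (M + N) (p.1, a) (q.1, b)) =
        (Matrix.of fun a b : Fin n => M (p.1, a) (q.1, b)) +
        (Matrix.of fun a b : Fin n => N (p.1, a) (q.1, b)) := by
      ext a b
      simp
    show S (Matrix.of fun a b : Fin n => (M + N) (p.1, a) (q.1, b)) p.2 q.2 = _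
    rw [h, map_add]
    simp [Matrix.add_apply]
  map_smul' c M := by
    ext p q
    have h : (Matrix.of fun a b : Fin n => (c • M) (p.1, a) (q.1, b)) =
        c • (Matrix.of fun a b : Fin n => M (p.1, a) (q.1, b)) := by
      ext a b
      simp
    show S (Matrix.of fun a b : Fin n => (c • M) (p.1, a) (q.1, b)) p.2 q.2 = _
    rw [h, _root_.map_smul]
    simp [Matrix.smul_apply]

lemma block_std {k : ℕ} (p1 q1 : Fin k) (i j : Fin n) (p1' q1' : Fin k) :
    (Matrix.of fun a b : Fin n =>
        Matrix.single ((p1, i) : Fin k × Fin n) ((q1, j) : Fin k × Fin n) (1 : ℂ)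
          (p1', a) (q1', b)) =
      if p1 = p1' ∧ q1 = q1' then Matrix.single i j 1 else 0 := by
  ext a b
  by_cases h1 : p1 = p1' <;> by_cases h2 : q1 = q1' <;>
    simp [Matrix.single, Prod.ext_iff, h1, h2, and_assoc, and_left_comm, and_comm]

lemma Phi_std (S : Matrix (Fin n) (Fin n) ℂ →ₗ[ℂ] Matrix (Fin m) (Fin m) ℂ) {k : ℕ}
    (p1 q1 : Fin k) (i j : Fin n) :
    Phi S k (Matrix.single ((p1, i) : Fin k × Fin n) ((q1, j) : Fin k × Fin n) (1 : ℂ)) =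
      Matrix.of fun p q : Fin k × Fin m =>
        if p1 = p.1 ∧ q1 = q.1 then S (Matrix.single i j 1) p.2 q.2 else 0 := by
  ext p q
  show S (Matrix.of fun a b : Fin n =>
      Matrix.single ((p1, i) : Fin k × Fin n) ((q1, j) : Fin k × Fin n) (1 : ℂ)
        (p.1, a) (q.1, b)) p.2 q.2 = _
  rw [block_std]
  by_cases h : p1 = p.1 ∧ q1 = q.1 <;> simp [h]

def amat (k : ℕ) (ψ : Fin k × Fin m → ℂ) : Matrix (Fin k × Fin n) (Fin n × Fin m) ℂ :=
  Matrix.of fun u v => if u.2 = v.1 then ψ (u.1, v.2) else 0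

lemma conjTranspose_mul_std_mul {α β : Type*} [Fintype α] [Fintype β] [DecidableEq α]
    (A : Matrix α β ℂ) (u v : α) :
    Aᴴ * Matrix.single u v (1 : ℂ) * A = Matrix.of fun x y => star (A u x) * A v y := by
  ext x y
  simp only [Matrix.mul_apply, Matrix.conjTranspose_apply, Matrix.single,
    Matrix.of_apply, mul_ite, mul_one, mul_zero, ite_mul, zero_mul, Finset.sum_mul,
    Finset.mul_sum]
  rw [Finset.sum_eq_single_of_mem v (Finset.mem_univ v) (by
    intro x' _ hx
    apply Finset.sum_eq_zero
    intro y' _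
    simp [Ne.symm hx])]
  rw [Finset.sum_eq_single_of_mem u (Finset.mem_univ u) (by
    intro y' _ hy
    simp [Ne.symm hy])]
  simp

noncomputable def dotp {α : Type*} [Fintype α] (ψ : α → ℂ) : Matrix α α ℂ →ₗ[ℂ] ℂ where
  toFun X := star ψ ⬝ᵥ (X *ᵥ ψ)
  map_add' X Y := by
    simp [Matrix.add_mulVec, dotProduct_add]
  map_smul' c X := by
    simp [Matrix.smul_mulVec, dotProduct_smul]

noncomputable def tfun (S : Matrix (Fin n) (Fin n) ℂ →ₗ[ℂ] Matrix (Fin m) (Fin m) ℂ) {k : ℕ}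
    (B : Matrix (Fin k × Fin n) (Fin n × Fin m) ℂ) :
    Matrix (Fin k × Fin n) (Fin k × Fin n) ℂ →ₗ[ℂ] ℂ where
  toFun M := Matrix.trace ((choi S)ᵀ * (Bᴴ * M * B))
  map_add' X Y := by
    simp [Matrix.mul_add, Matrix.add_mul, Matrix.trace_add]
  map_smul' c X := by
    simp [Matrix.mul_smul, Matrix.smul_mul, Matrix.trace_smul]

lemma key_identity (S : Matrix (Fin n) (Fin n) ℂ →ₗ[ℂ] Matrix (Fin m) (Fin m) ℂ) {k : ℕ}
    (ψ : Fin k × Fin m → ℂ) (M : Matrix (Fin k × Fin n) (Fin k × Fin n) ℂ) :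
    star ψ ⬝ᵥ (Phi S k M *ᵥ ψ) =
      Matrix.trace ((choi S)ᵀ * ((amat (n := n) k ψ)ᴴ * M * amat k ψ)) := by
  have hmaps : (dotp ψ).comp (Phi S k) = tfun S (amat k ψ) := by
    apply linearMap_ext_std
    rintro ⟨p1, i⟩ ⟨q1, j⟩
    show star ψ ⬝ᵥ (Phi S k _ *ᵥ ψ) = Matrix.trace ((choi S)ᵀ * _)
    rw [Phi_std, conjTranspose_mul_std_mul, trace_choiT_mul]
    -- RHS: collapse the i', j' sums
    have hr : ∀ i' j' : Fin n, ∀ k2 l2 : Fin m,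
        (Matrix.of fun x y : Fin n × Fin m => star (amat k ψ (p1, i) x) * amat k ψ (q1, j) y)
          (i', k2) (j', l2) =
        (if i = i' then star (ψ (p1, k2)) else 0) * (if j = j' then ψ (q1, l2) else 0) := by
      intro i' j' k2 l2
      by_cases h1 : i = i' <;> by_cases h2 : j = j' <;> simp [amat, h1, h2]
    simp only [hr]
    rw [Finset.sum_eq_single_of_mem i (Finset.mem_univ i) (by
      intro x _ hx
      refine Finset.sum_eq_zero fun j' _ => Finset.sum_eq_zero fun k2 _ =>
        Finset.sum_eq_zero fun l2 _ => ?_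
      simp [Ne.symm hx])]
    rw [Finset.sum_eq_single_of_mem j (Finset.mem_univ j) (by
      intro y _ hy
      refine Finset.sum_eq_zero fun k2 _ => Finset.sum_eq_zero fun l2 _ => ?_
      simp [Ne.symm hy])]
    simp only [if_pos rfl]
    -- LHS
    simp only [dotProduct, Matrix.mulVec, Matrix.of_apply, Pi.star_apply,
      Fintype.sum_prod_type, ite_mul, zero_mul, Finset.mul_sum]
    rw [Finset.sum_eq_single_of_mem p1 (Finset.mem_univ p1) (by
      intro x _ hx
      refine Finset.sum_eq_zero fun p2 _ => Finset.sum_eq_zero fun q1' _ =>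
        Finset.sum_eq_zero fun q2 _ => ?_
      simp only [ite_eq_right_iff, mul_eq_zero]
      refine Or.inr fun h => absurd h.1.symm hx)]
    refine Finset.sum_congr rfl fun p2 _ => ?_
    rw [Finset.sum_eq_single_of_mem q1 (Finset.mem_univ q1) (by
      intro y _ hy
      refine Finset.sum_eq_zero fun q2 _ => ?_
      simp only [ite_eq_right_iff, mul_eq_zero]
      refine Or.inr fun h => absurd h.2.symm hy)]
    simp only [if_pos rfl, and_self, if_true]
    refine Finset.sum_congr rfl fun q2 _ => ?_
    ring
  exact LinearMap.congr_fun hmaps M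


/-- The complete-positivity condition, stated as in the theorem. -/
def CPcond (S : Matrix (Fin n) (Fin n) ℂ →ₗ[ℂ] Matrix (Fin m) (Fin m) ℂ) : Prop :=
  ∀ k : ℕ, 1 ≤ k →
    ∀ M : Matrix (Fin k × Fin n) (Fin k × Fin n) ℂ, M.PosSemidef →
      (Matrix.of fun p q : Fin k × Fin m =>
        S (Matrix.of fun a b : Fin n => M (p.1, a) (q.1, b)) p.2 q.2).PosSemidef

lemma cp_of_choiT (S : Matrix (Fin n) (Fin n) ℂ →ₗ[ℂ] Matrix (Fin m) (Fin m) ℂ)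
    (hS : ∀ a : Matrix (Fin n) (Fin n) ℂ, a.IsHermitian → (S a).IsHermitian)
    (hC : (choi S)ᵀ.PosSemidef) : CPcond S := by
  intro k _ M hM
  rw [Matrix.posSemidef_iff_dotProduct_mulVec]
  constructor
  · -- Hermitian
    ext p q
    rw [Matrix.conjTranspose_apply]
    show star (S (Matrix.of fun a b : Fin n => M (q.1, a) (p.1, b)) q.2 p.2) =
      S (Matrix.of fun a b : Fin n => M (p.1, a) (q.1, b)) p.2 q.2
    have hb : (Matrix.of fun a b : Fin n => M (q.1, a) (p.1, b)) =
        (Matrix.of fun a b : Fin n => M (p.1, a) (q.1, b))ᴴ := by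
      ext a b
      rw [Matrix.conjTranspose_apply, Matrix.of_apply, Matrix.of_apply]
      conv_lhs => rw [← hM.1]
      rw [Matrix.conjTranspose_apply]
    rw [hb, map_conjTranspose S hS, Matrix.conjTranspose_apply, star_star]
  · intro ψ
    show 0 ≤ star ψ ⬝ᵥ (Phi S k M *ᵥ ψ)
    rw [key_identity]
    exact trace_mul_nonneg hC (hM.conjTranspose_mul_mul_same (amat k ψ))

lemma choiT_of_cp (S : Matrix (Fin n) (Fin n) ℂ →ₗ[ℂ] Matrix (Fin m) (Fin m) ℂ)
    (hn : 1 ≤ n) (hcp : CPcond S) : (choi S)ᵀ.PosSemidef := by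
  set w : Fin n × Fin n → ℂ := fun u => if u.1 = u.2 then 1 else 0 with hw
  have h := hcp n hn (outer w) (psd_outer w)
  have he : (Matrix.of fun p q : Fin n × Fin m =>
      S (Matrix.of fun a b : Fin n => outer w (p.1, a) (q.1, b)) p.2 q.2) = choi S := by
    ext ⟨p1, p2⟩ ⟨q1, q2⟩
    rw [choi_apply]
    have hblock : (Matrix.of fun a b : Fin n => outer w (p1, a) (q1, b)) =
        Matrix.single p1 q1 1 := by
      ext a b
      by_cases h1 : p1 = a <;> by_cases h2 : q1 = b <;>
        simp [outer, hw, Matrix.single, h1, h2]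
    rw [Matrix.of_apply]
    rw [hblock]
  rw [he] at h
  exact h.transpose

lemma tracePos_of_choiT (S : Matrix (Fin n) (Fin n) ℂ →ₗ[ℂ] Matrix (Fin m) (Fin m) ℂ)
    (hC : (choi S)ᵀ.PosSemidef) :
    ∀ T : Matrix (Fin n × Fin m) (Fin n × Fin m) ℂ, T.PosSemidef →
      ∃ r : ℝ, 0 ≤ r ∧ Matrix.trace ((choi S)ᵀ * T) = (r : ℂ) := by
  intro T hT
  have h0 := trace_mul_nonneg hC hT
  rw [Complex.le_def] at h0
  refine ⟨(Matrix.trace ((choi S)ᵀ * T)).re, by simpa using h0.1, ?_⟩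
  apply Complex.ext <;> simp [← h0.2]

lemma choiT_of_tracePos (S : Matrix (Fin n) (Fin n) ℂ →ₗ[ℂ] Matrix (Fin m) (Fin m) ℂ)
    (hS : ∀ a : Matrix (Fin n) (Fin n) ℂ, a.IsHermitian → (S a).IsHermitian)
    (h : ∀ T : Matrix (Fin n × Fin m) (Fin n × Fin m) ℂ, T.PosSemidef →
      ∃ r : ℝ, 0 ≤ r ∧ Matrix.trace ((choi S)ᵀ * T) = (r : ℂ)) :
    (choi S)ᵀ.PosSemidef := by
  rw [Matrix.posSemidef_iff_dotProduct_mulVec]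
  constructor
  · exact (choi_isHermitian S hS).transpose
  · intro x
    obtain ⟨r, hr, he⟩ := h (outer x) (psd_outer x)
    rw [← trace_mul_outer, he]
    exact_mod_cast hr

noncomputable def Flin (S : Matrix (Fin n) (Fin n) ℂ →ₗ[ℂ] Matrix (Fin m) (Fin m) ℂ) :
    Matrix (Fin n × Fin m) (Fin n × Fin m) ℂ →ₗ[ℂ] ℂ where
  toFun T := Matrix.trace ((choi S)ᵀ * T)
  map_add' X Y := by simp [Matrix.mul_add, Matrix.trace_add]
  map_smul' c X := by simp [Matrix.mul_smul, Matrix.trace_smul]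

lemma herm_decomp {α : Type*} (A : Matrix α α ℂ) :
    ∃ A1 A2 : Matrix α α ℂ, A1.IsHermitian ∧ A2.IsHermitian ∧ A = A1 + Complex.I • A2 := by
  refine ⟨((1:ℂ)/2) • (A + Aᴴ), (-(Complex.I)/2) • (A - Aᴴ), ?_, ?_, ?_⟩
  · rw [Matrix.IsHermitian, conjTranspose_smul, conjTranspose_add, conjTranspose_conjTranspose]
    simp [add_comm]
  · rw [Matrix.IsHermitian, conjTranspose_smul, conjTranspose_sub, conjTranspose_conjTranspose]
    rw [show star (-(Complex.I)/2) = Complex.I/2 by simp [Complex.ext_iff]]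
    ext i j
    simp [Matrix.sub_apply]
    ring
  · ext i j
    simp [Matrix.add_apply, Matrix.sub_apply]
    ring_nf
    rw [Complex.I_sq]
    ring

lemma hgen (S : Matrix (Fin n) (Fin n) ℂ →ₗ[ℂ] Matrix (Fin m) (Fin m) ℂ)
    (S' : Matrix (Fin n × Fin m) (Fin n × Fin m) ℂ →ₗ[ℂ] ℂ)
    (hS' : ∀ (a : Matrix (Fin n) (Fin n) ℂ) (b : Matrix (Fin m) (Fin m) ℂ),
        a.IsHermitian → b.IsHermitian →
        S' (Matrix.kroneckerMap (· * ·) a bᵀ) = Matrix.trace (S a * b))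
    (a : Matrix (Fin n) (Fin n) ℂ) (b : Matrix (Fin m) (Fin m) ℂ) :
    S' (Matrix.kroneckerMap (· * ·) a bᵀ) = Matrix.trace (S a * b) := by
  obtain ⟨a1, a2, ha1, ha2, ha⟩ := herm_decomp a
  obtain ⟨b1, b2, hb1, hb2, hb⟩ := herm_decomp b
  rw [ha, hb]
  simp only [Matrix.transpose_add, Matrix.transpose_smul, Matrix.add_kronecker,
    Matrix.kronecker_add, Matrix.smul_kronecker, Matrix.kronecker_smul, map_add,
    _root_.map_smul, smul_eq_mul, Matrix.add_mul, Matrix.mul_add, Matrix.trace_add,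
    Matrix.smul_mul, Matrix.mul_smul, Matrix.trace_smul]
  rw [hS' a1 b1 ha1 hb1, hS' a1 b2 ha1 hb2, hS' a2 b1 ha2 hb1, hS' a2 b2 ha2 hb2]

lemma kron_std (i j : Fin n) (k l : Fin m) :
    Matrix.single ((i, k) : Fin n × Fin m) ((j, l) : Fin n × Fin m) (1 : ℂ) =
      Matrix.kroneckerMap (· * ·) (Matrix.single i j 1) (Matrix.single l k 1)ᵀ := by
  ext ⟨a, b⟩ ⟨c, d⟩
  by_cases h1 : i = a <;> by_cases h2 : j = c <;> by_cases h3 : k = b <;> by_cases h4 : l = d <;>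
    simp [Matrix.single, Prod.ext_iff, h1, h2, h3, h4]

lemma uniq (S : Matrix (Fin n) (Fin n) ℂ →ₗ[ℂ] Matrix (Fin m) (Fin m) ℂ)
    (S' : Matrix (Fin n × Fin m) (Fin n × Fin m) ℂ →ₗ[ℂ] ℂ)
    (hS' : ∀ (a : Matrix (Fin n) (Fin n) ℂ) (b : Matrix (Fin m) (Fin m) ℂ),
        a.IsHermitian → b.IsHermitian →
        S' (Matrix.kroneckerMap (· * ·) a bᵀ) = Matrix.trace (S a * b)) :
    S' = Flin S := by
  apply linearMap_ext_std
  rintro ⟨i, k⟩ ⟨j, l⟩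
  rw [kron_std]
  rw [hgen S S' hS']
  show _ = Matrix.trace ((choi S)ᵀ * _)
  rw [feq]

end Stmt9Aux

/-- Finite-dimensional complete positivity.  For a Hermitian-preserving
(complex-)linear map `S` from `n×n` to `m×m` complex matrices:
(a) there is a unique linear functional `S'` on `(nm)×(nm)` matrices with
`S'(a ⊗ bᵀ) = tr(S(a)·b)` for Hermitian `a`, `b`;
(b) `S` is completely positive iff any such `S'` takes nonnegative real values on
positive semidefinite matrices;
(c) `S` is completely positive iff the transpose of the Choi matrix
`Σ_{i,j} E_{ij} ⊗ S(E_{ij})` is positive semidefinite. -/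
theorem stmt9 (n m : ℕ) (hn : 1 ≤ n) (hm : 1 ≤ m)
    (S : Matrix (Fin n) (Fin n) ℂ →ₗ[ℂ] Matrix (Fin m) (Fin m) ℂ)
    (hS : ∀ a : Matrix (Fin n) (Fin n) ℂ, a.IsHermitian → (S a).IsHermitian) :
    (∃! S' : Matrix (Fin n × Fin m) (Fin n × Fin m) ℂ →ₗ[ℂ] ℂ,
      ∀ (a : Matrix (Fin n) (Fin n) ℂ) (b : Matrix (Fin m) (Fin m) ℂ),
        a.IsHermitian → b.IsHermitian →
        S' (Matrix.kroneckerMap (· * ·) a bᵀ) = Matrix.trace (S a * b)) ∧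
    (∀ S' : Matrix (Fin n × Fin m) (Fin n × Fin m) ℂ →ₗ[ℂ] ℂ,
      (∀ (a : Matrix (Fin n) (Fin n) ℂ) (b : Matrix (Fin m) (Fin m) ℂ),
        a.IsHermitian → b.IsHermitian →
        S' (Matrix.kroneckerMap (· * ·) a bᵀ) = Matrix.trace (S a * b)) →
      ((∀ k : ℕ, 1 ≤ k →
          ∀ M : Matrix (Fin k × Fin n) (Fin k × Fin n) ℂ, M.PosSemidef →
            (Matrix.of fun p q : Fin k × Fin m =>
              S (Matrix.of fun a b : Fin n => M (p.1, a) (q.1, b)) p.2 q.2).PosSemidef) ↔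
        (∀ T : Matrix (Fin n × Fin m) (Fin n × Fin m) ℂ, T.PosSemidef →
          ∃ r : ℝ, 0 ≤ r ∧ S' T = (r : ℂ)))) ∧
    ((∀ k : ℕ, 1 ≤ k →
        ∀ M : Matrix (Fin k × Fin n) (Fin k × Fin n) ℂ, M.PosSemidef →
          (Matrix.of fun p q : Fin k × Fin m =>
            S (Matrix.of fun a b : Fin n => M (p.1, a) (q.1, b)) p.2 q.2).PosSemidef) ↔
      (∑ i : Fin n, ∑ j : Fin n,
        Matrix.kroneckerMap (· * ·) (Matrix.single i j (1 : ℂ))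
          (S (Matrix.single i j (1 : ℂ))))ᵀ.PosSemidef) := by
  refine ⟨⟨Stmt9Aux.Flin S, fun a b _ _ => Stmt9Aux.feq S a b,
      fun S' hS' => Stmt9Aux.uniq S S' hS'⟩, ?_, ?_⟩
  · intro S' hS'
    have hE : S' = Stmt9Aux.Flin S := Stmt9Aux.uniq S S' hS'
    subst hE
    constructor
    · intro hcp
      exact Stmt9Aux.tracePos_of_choiT S (Stmt9Aux.choiT_of_cp S hn hcp)
    · intro htr
      exact Stmt9Aux.cp_of_choiT S hS (Stmt9Aux.choiT_of_tracePos S hS htr)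
  · constructor
    · intro hcp
      exact Stmt9Aux.choiT_of_cp S hn hcp
    · intro hC
      exact Stmt9Aux.cp_of_choiT S hS hC
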